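/- Let i ≥ 1 be a natural number and let Λ be any type. There is no view-distance-i verifier A over the label type Λ satisfying both: (error-tolerant completeness) for every n ≥ 1 and every connected acyclic simple graph G on Fin n, there exists an oracular labeling L_O : Fin n → Λ such that every labeling L : Fin n → Λ that differs from L_O at no more than i vertices satisfies A(G, L, v) = true for every vertex v; and (soundness) for every n and every connected simple graph G on Fin n that contains a cycle, for every labeling L : Fin n → Λ there exists a vertex v with A(G, L, v) = false. -/

import Mathlib

open SimpleGraph
open scoped Fin.NatCast Fin.CommRing

/-- Split `t % m` into the three possible linear cases when `t < 3m`. -/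
lemma mod_cases3 (t m : ℕ) (h : t < 3*m) :
    (t % m = t ∧ t < m) ∨ (t % m + m = t ∧ t < 2*m) ∨ (t % m + 2*m = t) := by
  rcases Nat.lt_or_ge t m with h1 | h1
  · exact Or.inl ⟨Nat.mod_eq_of_lt h1, h1⟩
  rcases Nat.lt_or_ge t (2*m) with h2 | h2
  · refine Or.inr (Or.inl ⟨?_, h2⟩)
    rw [Nat.mod_eq_sub_mod h1, Nat.mod_eq_of_lt (by omega)]; omega
  · refine Or.inr (Or.inr ?_)
    rw [Nat.mod_eq_sub_mod h1, Nat.mod_eq_sub_mod (by omega), Nat.mod_eq_of_lt (by omega)]; omega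

/-- Any walk in the path graph has length at least the distance of the endpoints' values. -/
lemma path_walk_len {n : ℕ} {a b : Fin n} (p : (pathGraph n).Walk a b) :
    a.val - b.val + (b.val - a.val) ≤ p.length := by
  induction p with
  | nil => simp
  | @cons a c b h q ih =>
    rw [pathGraph_adj] at h
    rw [Walk.length_cons]
    omega

/-- Explicit walks in the path graph. -/
lemma path_exists_walk {n : ℕ} (k : ℕ) : ∀ (a : Fin n) (h : a.val + k < n),
    ∃ p : (pathGraph n).Walk a ⟨a.val + k, h⟩, p.length = k := by
  induction k with
  | zero => exact fun a h => ⟨Walk.nil.copy rfl (Fin.ext rfl), by simp⟩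
  | succ k ih =>
    intro a h
    have h1 : ((⟨a.val + 1, by omega⟩ : Fin n)).val + k < n := by simp; omega
    obtain ⟨q, hq⟩ := ih ⟨a.val + 1, by omega⟩ h1
    have hadj : (pathGraph n).Adj a ⟨a.val + 1, by omega⟩ := by
      rw [pathGraph_adj]; left; rfl
    refine ⟨(Walk.cons hadj q).copy rfl (Fin.ext (by simp; omega)), by simp [hq]⟩

lemma path_reachable {n : ℕ} (a b : Fin n) : (pathGraph n).Reachable a b := by
  rcases le_total a.val b.val with h | h
  · obtain ⟨p, -⟩ := path_exists_walk (b.val - a.val) a (by have := b.isLt; omega)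
    have he : (⟨a.val + (b.val - a.val), by have := b.isLt; omega⟩ : Fin n) = b :=
      Fin.ext (by simp; omega)
    exact (p.copy rfl he).reachable
  · obtain ⟨p, -⟩ := path_exists_walk (a.val - b.val) b (by have := a.isLt; omega)
    have he : (⟨b.val + (a.val - b.val), by have := a.isLt; omega⟩ : Fin n) = a :=
      Fin.ext (by simp; omega)
    exact (p.copy rfl he).reachable.symm

/-- Ball characterization in the path graph. -/
lemma path_ball {n : ℕ} (a b : Fin n) (K : ℕ) :
    (pathGraph n).dist a b ≤ K ↔ (a.val ≤ b.val + K ∧ b.val ≤ a.val + K) := by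
  constructor
  · intro hd
    obtain ⟨p, hp⟩ := (path_reachable a b).exists_walk_length_eq_dist
    have := path_walk_len p
    omega
  · rintro ⟨h1, h2⟩
    rcases le_total a.val b.val with h | h
    · obtain ⟨p, hp⟩ := path_exists_walk (b.val - a.val) a (by have := b.isLt; omega)
      have he : (⟨a.val + (b.val - a.val), by have := b.isLt; omega⟩ : Fin n) = b :=
        Fin.ext (by simp; omega)
      have := SimpleGraph.dist_le (p.copy rfl he)
      simp [hp] at this; omega
    · obtain ⟨p, hp⟩ := path_exists_walk (a.val - b.val) b (by have := a.isLt; omega)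
      have he : (⟨b.val + (a.val - b.val), by have := a.isLt; omega⟩ : Fin n) = a :=
        Fin.ext (by simp; omega)
      have := SimpleGraph.dist_le ((p.copy rfl he).reverse)
      simp [hp] at this; omega

/-- For `a ≠ b` in `Fin m`, the values of the two differences sum to `m`. -/
lemma fin_sub_add {m : ℕ} [NeZero m] {a b : Fin m} (hne : a ≠ b) :
    (a - b).val + (b - a).val = m := by
  have h0 : (a - b) + (b - a) = 0 := by ring
  have h1 : ((a - b).val + (b - a).val) % m = 0 := by
    have := congrArg Fin.val h0
    rw [Fin.add_def] at this
    simpa using this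
  obtain ⟨c, hc⟩ := Nat.dvd_of_mod_eq_zero h1
  have hab : (a - b) ≠ 0 := sub_ne_zero.mpr hne
  have hab' : (a - b).val ≠ 0 := fun h => hab (Fin.ext (by simpa using h))
  have l1 := (a - b).isLt
  have l2 := (b - a).isLt
  have hlt : m * c < m * 2 := by omega
  have hc2 : c < 2 := Nat.lt_of_mul_lt_mul_left hlt
  have hc0 : c ≠ 0 := by rintro rfl; omega
  have hc1 : c = 1 := by omega
  subst hc1
  omega

/-- Lower bound on walk lengths in the cycle graph. -/
lemma cycle_walk_len {m : ℕ} [NeZero m] {a b : Fin m} (p : (cycleGraph m).Walk a b) :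
    min (b - a).val (a - b).val ≤ p.length := by
  induction p with
  | nil => simp [sub_self]
  | @cons a x b h q ih =>
    rw [Walk.length_cons]
    have hadj := cycleGraph_adj'.mp h
    have hax : a ≠ x := h.ne
    have h1 : (b - a).val = ((b - x).val + (x - a).val) % m := by
      have : (b - x) + (x - a) = b - a := by ring
      rw [← this, Fin.add_def]
    have h2 : (a - b).val = ((a - x).val + (x - b).val) % m := by
      have : (a - x) + (x - b) = a - b := by ring
      rw [← this, Fin.add_def]
    have e1 := mod_cases3 ((b - x).val + (x - a).val) m
      (by have := (b - x).isLt; have := (x - a).isLt; omega)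
    have e2 := mod_cases3 ((a - x).val + (x - b).val) m
      (by have := (a - x).isLt; have := (x - b).isLt; omega)
    have s1 := fin_sub_add hax
    have s2 : a = b ∨ (a - b).val + (b - a).val = m := by
      by_cases hh : a = b
      · exact Or.inl hh
      · exact Or.inr (fin_sub_add hh)
    have s3 : x = b ∨ (x - b).val + (b - x).val = m := by
      by_cases hh : x = b
      · exact Or.inl hh
      · exact Or.inr (fin_sub_add hh)
    have z1 : ∀ y : Fin m, (y - y).val = 0 := by intro y; simp [sub_self]
    rcases s2 with rfl | s2
    · have := z1 a; omega
    rcases s3 with rfl | s3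
    · have := z1 x
      have l1 := (a - x).isLt
      omega
    have l1 := (a - x).isLt
    have l2 := (x - a).isLt
    have l3 := (b - x).isLt
    have l4 := (x - b).isLt
    have l5 := (a - b).isLt
    have l6 := (b - a).isLt
    omega

/-- Explicit walks around the cycle graph. -/
lemma cycle_exists_walk {m : ℕ} [NeZero m] (hm : 2 ≤ m) (k : ℕ) : ∀ (a : Fin m),
    ∃ p : (cycleGraph m).Walk a (a + (k : Fin m)), p.length = k := by
  induction k with
  | zero => exact fun a => ⟨Walk.nil.copy rfl (by simp), by simp⟩
  | succ k ih =>
    intro a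
    obtain ⟨q, hq⟩ := ih a
    have hadj : (cycleGraph m).Adj (a + (k : Fin m)) (a + (k : Fin m) + 1) := by
      rw [cycleGraph_adj']
      right
      have : (a + (k : Fin m) + 1) - (a + (k : Fin m)) = 1 := by ring
      rw [this, Fin.val_one']
      exact Nat.mod_eq_of_lt hm
    have he : a + ((k : Fin m)) + 1 = a + (((k+1 : ℕ)) : Fin m) := by push_cast; ring
    exact ⟨(q.concat hadj).copy rfl he, by rw [Walk.length_copy, Walk.length_concat, hq]⟩

lemma cycle_dist_le {m : ℕ} [NeZero m] (hm : 2 ≤ m) (a b : Fin m) :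
    (cycleGraph m).dist a b ≤ (b - a).val := by
  obtain ⟨p, hp⟩ := cycle_exists_walk hm (b - a).val a
  have he : a + (((b - a).val : ℕ) : Fin m) = b := by
    rw [Fin.cast_val_eq_self]; ring
  have := SimpleGraph.dist_le (p.copy rfl he)
  rw [Walk.length_copy] at this
  omega

/-- Ball characterization in the cycle graph. -/
lemma cycle_ball {m : ℕ} [NeZero m] (hm : 2 ≤ m) (a b : Fin m) (K : ℕ) :
    (cycleGraph m).dist a b ≤ K ↔ min (b - a).val (a - b).val ≤ K := by
  constructor
  · intro hd
    have hr : (cycleGraph m).Reachable a b := by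
      obtain ⟨p, -⟩ := cycle_exists_walk hm (b - a).val a
      have he : a + (((b - a).val : ℕ) : Fin m) = b := by
        rw [Fin.cast_val_eq_self]; ring
      exact (p.copy rfl he).reachable
    obtain ⟨p, hp⟩ := hr.exists_walk_length_eq_dist
    have := cycle_walk_len p
    omega
  · intro h
    have h1 := cycle_dist_le hm a b
    have h2 := cycle_dist_le hm b a
    rw [SimpleGraph.dist_comm] at h2
    omega


/-- Helper: no cycle in a path graph based at its maximal vertex. -/
lemma pathGraph_no_cycle_at_max {n : ℕ} (u : Fin n) (c : (pathGraph n).Walk u u)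
    (hc : c.IsCycle) (hmax : ∀ x ∈ c.support, x ≤ u) : False := by
  cases c with
  | nil => exact hc.not_of_nil
  | @cons _ b _ h q =>
    obtain ⟨hq, he⟩ := (Walk.cons_isCycle_iff q h).mp hc
    have hbmem : b ∈ (Walk.cons h q).support := by
      rw [Walk.support_cons]
      exact List.mem_cons_of_mem _ q.start_mem_support
    have hb : b.val ≤ u.val := hmax b hbmem
    have hbu : b.val ≠ u.val := fun hh => h.ne (Fin.ext hh).symm
    have hb1 : b.val + 1 = u.val := by
      rcases pathGraph_adj.mp h with h' | h' <;> omega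
    cases q with
    | nil => exact h.ne rfl
    | @cons _ b2 _ h2 q2 =>
      obtain ⟨x, r, h', heq⟩ := Walk.exists_cons_eq_concat h2 q2
      have hxmem : x ∈ (Walk.cons h (Walk.cons h2 q2)).support := by
        rw [Walk.support_cons]
        refine List.mem_cons_of_mem _ ?_
        rw [heq, Walk.concat_eq_append, Walk.support_append]
        exact List.mem_append_left _ r.end_mem_support
      have hx : x.val ≤ u.val := hmax x hxmem
      have hxu : x.val ≠ u.val := fun hh => h'.ne (Fin.ext hh)
      have hx1 : x.val + 1 = u.val := by
        rcases pathGraph_adj.mp h' with h'' | h'' <;> omega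
      have hxb : x = b := Fin.ext (by omega)
      apply he
      rw [heq, Walk.edges_concat]
      rw [List.concat_eq_append]
      apply List.mem_append_right
      simp [hxb, Sym2.eq_swap]

/-- The path graph is acyclic. -/
lemma pathGraph_isAcyclic (n : ℕ) : (pathGraph n).IsAcyclic := by
  intro v c hc
  have hne : c.support.toFinset.Nonempty := ⟨v, by simp⟩
  obtain ⟨u, hu, hmax⟩ := Finset.exists_max_image c.support.toFinset id hne
  rw [List.mem_toFinset] at hu
  have hc' := hc.rotate hu
  apply pathGraph_no_cycle_at_max u (c.rotate u hu) hc'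
  intro x hx
  rw [Walk.support_eq_cons] at hx
  rcases List.mem_cons.mp hx with rfl | hx
  · exact le_refl _
  · have : x ∈ c.support.tail := (Walk.support_rotate c u hu).mem_iff.mp hx
    exact hmax x (List.mem_toFinset.mpr (List.mem_of_mem_tail this))

/-- The cycle graph on at least 3 vertices is not acyclic. -/
lemma cycleGraph_not_acyclic (j : ℕ) : ¬ (cycleGraph (j+3)).IsAcyclic := by
  intro h
  have htree : (cycleGraph (j+3)).IsTree := ⟨cycleGraph_connected, h⟩
  have hcount := htree.card_edgeFinset
  have hdeg : ∀ v : Fin (j+3), (cycleGraph (j+3)).degree v = 2 :=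
    fun v => cycleGraph_degree_three_le
  have hsum := SimpleGraph.sum_degrees_eq_twice_card_edges (cycleGraph (j+3))
  simp only [hdeg, Finset.sum_const, Finset.card_univ, Fintype.card_fin, smul_eq_mul] at hsum
  rw [Fintype.card_fin] at hcount
  omega

lemma cyc_ball_char (i : ℕ) (v u : Fin (2*i+2)) :
    (cycleGraph (2*i+2)).dist v u ≤ i ↔ (u - v).val ≠ i+1 := by
  haveI : NeZero (2*i+2) := ⟨by omega⟩
  rw [cycle_ball (by omega)]
  by_cases hu : u = v
  · subst hu
    simp [sub_self]
  · have hs := fin_sub_add (a := u) (b := v) hu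
    have l1 := (u - v).isLt
    have l2 := (v - u).isLt
    omega

lemma exists_ball_iso (i : ℕ) (hi : 1 ≤ i) (v : Fin (2*i+2)) (w : Fin (4*i+2))
    (hw : w.val = v.val + i) :
    ∃ φ : (cycleGraph (2*i+2)).induce {u | (cycleGraph (2*i+2)).dist v u ≤ i} ≃g
          (pathGraph (4*i+2)).induce {p | (pathGraph (4*i+2)).dist w p ≤ i},
      ∀ u : {u : Fin (2*i+2) | (cycleGraph (2*i+2)).dist v u ≤ i},
        (↑(φ u) : Fin (4*i+2)).val
          = v.val + (((u : Fin (2*i+2)) - v).val + i) % (2*i+2) := by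
  haveI : NeZero (2*i+2) := ⟨by omega⟩
  have hmv : v.val < 2*i+2 := v.isLt
  have hBC : ∀ u : Fin (2*i+2),
      (cycleGraph (2*i+2)).dist v u ≤ i ↔ (u - v).val ≠ i+1 := cyc_ball_char i v
  have hBP : ∀ p : Fin (4*i+2),
      (pathGraph (4*i+2)).dist w p ≤ i ↔ (v.val ≤ p.val ∧ p.val ≤ v.val + 2*i) := by
    intro p
    rw [path_ball, hw]
    omega
  set o : Fin (2*i+2) → ℕ := fun u => ((u - v).val + i) % (2*i+2) with ho
  have key1 : ∀ u : Fin (2*i+2), (u - v).val ≠ i+1 → o u ≤ 2*i ∧ v.val + o u < 4*i+2 := by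
    intro u hu
    have l1 := (u - v).isLt
    have e := mod_cases3 ((u - v).val + i) (2*i+2) (by omega)
    simp only [ho]
    omega
  have key2 : ∀ p : Fin (4*i+2), v.val ≤ p.val → p.val ≤ v.val + 2*i →
      ((v + ((p.val - v.val + i + 2 : ℕ) : Fin (2*i+2))) - v).val ≠ i+1 := by
    intro p h1 h2
    have hc : (v + ((p.val - v.val + i + 2 : ℕ) : Fin (2*i+2))) - v
        = ((p.val - v.val + i + 2 : ℕ) : Fin (2*i+2)) := by ring
    rw [hc, Fin.val_natCast]
    have e := mod_cases3 (p.val - v.val + i + 2) (2*i+2) (by omega)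
    omega
  set F : {u : Fin (2*i+2) | (cycleGraph (2*i+2)).dist v u ≤ i} →
      {p : Fin (4*i+2) | (pathGraph (4*i+2)).dist w p ≤ i} :=
    fun u => ⟨⟨v.val + o ↑u, (key1 ↑u ((hBC ↑u).mp u.2)).2⟩,
      (hBP _).mpr ⟨Nat.le_add_right _ _,
        Nat.add_le_add_left (key1 ↑u ((hBC ↑u).mp u.2)).1 _⟩⟩ with hF
  set G : {p : Fin (4*i+2) | (pathGraph (4*i+2)).dist w p ≤ i} →
      {u : Fin (2*i+2) | (cycleGraph (2*i+2)).dist v u ≤ i} :=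
    fun p => ⟨v + (((p : Fin (4*i+2)).val - v.val + i + 2 : ℕ) : Fin (2*i+2)),
      (hBC _).mpr (key2 ↑p ((hBP ↑p).mp p.2).1 ((hBP ↑p).mp p.2).2)⟩ with hG
  have hleft : Function.LeftInverse G F := by
    rintro ⟨u, hu⟩
    apply Subtype.ext
    simp only [hF, hG]
    have hred : v.val + o u - v.val = o u := by omega
    rw [hred]
    have huvv : v + (u - v) = u := by ring
    have hval : ((o u + i + 2 : ℕ) : Fin (2*i+2)) = u - v := by
      apply Fin.ext
      rw [Fin.val_natCast]
      have l1 := (u - v).isLt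
      have e1 := mod_cases3 ((u - v).val + i) (2*i+2) (by omega)
      have e2 := mod_cases3 (o u + i + 2) (2*i+2)
        (by have : o u < 2*i+2 := Nat.mod_lt _ (by omega); omega)
      simp only [ho] at e1 e2 ⊢
      omega
    rw [hval, huvv]
  have hright : Function.RightInverse G F := by
    rintro ⟨p, hp⟩
    apply Subtype.ext
    apply Fin.ext
    simp only [hF, hG]
    obtain ⟨h1, h2⟩ := (hBP p).mp hp
    have hc : (v + ((p.val - v.val + i + 2 : ℕ) : Fin (2*i+2))) - v
        = ((p.val - v.val + i + 2 : ℕ) : Fin (2*i+2)) := by ring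
    show v.val + o _ = p.val
    rw [ho]
    simp only
    rw [hc, Fin.val_natCast]
    have e1 := mod_cases3 (p.val - v.val + i + 2) (2*i+2) (by omega)
    have e2 := mod_cases3 ((p.val - v.val + i + 2) % (2*i+2) + i) (2*i+2)
      (by have := Nat.mod_lt (p.val - v.val + i + 2) (y := 2*i+2) (by omega); omega)
    omega
  refine ⟨⟨⟨F, G, hleft, hright⟩, ?_⟩, fun u => rfl⟩
  rintro ⟨a, ha⟩ ⟨b, hb⟩
  simp only [Equiv.coe_fn_mk, hF, comap_adj, Function.Embedding.coe_subtype]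
  rw [pathGraph_adj, cycleGraph_adj']
  have ha' := (hBC a).mp ha
  have hb' := (hBC b).mp hb
  have E1 : (a - b).val = ((2*i+2) - (b - v).val + (a - v).val) % (2*i+2) := by
    have : a - b = (a - v) - (b - v) := by ring
    rw [this, Fin.sub_def]
  have E2 : (b - a).val = ((2*i+2) - (a - v).val + (b - v).val) % (2*i+2) := by
    have : b - a = (b - v) - (a - v) := by ring
    rw [this, Fin.sub_def]
  have l1 := (a - v).isLt
  have l2 := (b - v).isLt
  have e1 := mod_cases3 ((a - v).val + i) (2*i+2) (by omega)
  have e2 := mod_cases3 ((b - v).val + i) (2*i+2) (by omega)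
  have e3 := mod_cases3 ((2*i+2) - (b - v).val + (a - v).val) (2*i+2) (by omega)
  have e4 := mod_cases3 ((2*i+2) - (a - v).val + (b - v).val) (2*i+2) (by omega)
  simp only [ho]
  omega

/-- `A` is a view-distance-`d` verifier over the label type `Λ`: its verdict at a
vertex is invariant under labeled pointed isomorphisms of radius-`d` balls. -/
def IsLocalVerifier (Λ : Type*) (d : ℕ)
    (A : ∀ n : ℕ, SimpleGraph (Fin n) → (Fin n → Λ) → Fin n → Bool) : Prop :=
  ∀ (n n' : ℕ) (G : SimpleGraph (Fin n)) (G' : SimpleGraph (Fin n'))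
    (L : Fin n → Λ) (L' : Fin n' → Λ) (v : Fin n) (v' : Fin n')
    (φ : G.induce {u | G.dist v u ≤ d} ≃g G'.induce {u | G'.dist v' u ≤ d})
    (hv : G.dist v v ≤ d),
    (↑(φ ⟨v, hv⟩) = v') →
    (∀ u : {u | G.dist v u ≤ d}, L' ↑(φ u) = L ↑u) →
    A n G L v = A n' G' L' v'

/-- Impossibility of error-resilient verification of cycle absence: no
view-distance-`i` verifier tolerates `i` adversarial label errors in the whole
graph, with any label type. -/
theorem no_error_tolerant_cycle_absence (i : ℕ) (hi : 1 ≤ i) (Λ : Type) :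
    ¬ ∃ A : ∀ n : ℕ, SimpleGraph (Fin n) → (Fin n → Λ) → Fin n → Bool,
      IsLocalVerifier Λ i A ∧
      (∀ (n : ℕ), 1 ≤ n → ∀ G : SimpleGraph (Fin n), G.Connected → G.IsAcyclic →
        ∃ L_O : Fin n → Λ, ∀ L : Fin n → Λ,
          {v : Fin n | L v ≠ L_O v}.ncard ≤ i → ∀ v : Fin n, A n G L v = true) ∧
      (∀ (n : ℕ) (G : SimpleGraph (Fin n)), G.Connected → ¬ G.IsAcyclic →
        ∀ L : Fin n → Λ, ∃ v : Fin n, A n G L v = false) := by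
  rintro ⟨A, hLoc, hComp, hSound⟩
  haveI : NeZero (2*i+2) := ⟨by omega⟩
  obtain ⟨L_O, hL_O⟩ := hComp (4*i+2) (by omega) (pathGraph (4*i+2))
      (pathGraph_connected (4*i+1)) (pathGraph_isAcyclic (4*i+2))
  have hCycConn : (cycleGraph (2*i+2)).Connected := cycleGraph_connected (n := 2*i+1)
  have hCycNotAcyc : ¬ (cycleGraph (2*i+2)).IsAcyclic := by
    obtain ⟨j, hj⟩ : ∃ j, 2*i+2 = j+3 := ⟨2*i-1, by omega⟩
    rw [hj]
    exact cycleGraph_not_acyclic j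
  set L_C : Fin (2*i+2) → Λ := fun x => L_O ⟨i + x.val, by have := x.isLt; omega⟩ with hL_C
  obtain ⟨v, hv⟩ := hSound (2*i+2) (cycleGraph (2*i+2)) hCycConn hCycNotAcyc L_C
  have hmv : v.val < 2*i+2 := v.isLt
  set w : Fin (4*i+2) := ⟨v.val + i, by omega⟩ with hwdef
  set L' : Fin (4*i+2) → Λ := fun j =>
    if v.val ≤ j.val ∧ j.val ≤ v.val + 2*i then
      L_O ⟨(j.val + i + 2) % (2*i+2) + i,
        by have := Nat.mod_lt (j.val + i + 2) (y := 2*i+2) (by omega); omega⟩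
    else L_O j with hL'
  -- the modified path labeling differs from the oracle labeling in at most `i` positions
  have herr : {j : Fin (4*i+2) | L' j ≠ L_O j}.ncard ≤ i := by
    classical
    have hFlt : ∀ x ∈ Finset.Ico v.val i ∪ Finset.Ico (3*i+2) (v.val + 2*i+1), x < 4*i+2 := by
      intro x hx
      rcases Finset.mem_union.mp hx with hx | hx <;>
        · rw [Finset.mem_Ico] at hx; omega
    have hsub : {j : Fin (4*i+2) | L' j ≠ L_O j} ⊆
        ↑((Finset.Ico v.val i ∪ Finset.Ico (3*i+2) (v.val + 2*i+1)).attachFin hFlt) := by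
      intro j hj
      simp only [Set.mem_setOf_eq] at hj
      rw [Finset.mem_coe, Finset.mem_attachFin]
      by_contra hnot
      apply hj
      rw [Finset.mem_union, Finset.mem_Ico, Finset.mem_Ico] at hnot
      push_neg at hnot
      rw [hL']
      simp only
      by_cases hwin : v.val ≤ j.val ∧ j.val ≤ v.val + 2*i
      · rw [if_pos hwin]
        have hij : i ≤ j.val := by
          rcases Nat.lt_or_ge j.val i with h | h
          · exact absurd (hnot.1 hwin.1) (by omega)
          · exact h
        have hij2 : j.val < 3*i+2 := by
          rcases Nat.lt_or_ge j.val (3*i+2) with h | h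
          · exact h
          · exact absurd (hnot.2 h) (by omega)
        have e := mod_cases3 (j.val + i + 2) (2*i+2) (by have := j.isLt; omega)
        have hidx : ((j.val + i + 2) % (2*i+2) + i) = j.val := by omega
        exact congrArg L_O (Fin.ext hidx)
      · rw [if_neg hwin]
    have hle := Set.ncard_le_ncard hsub (Finset.finite_toSet _)
    rw [Set.ncard_coe_finset, Finset.card_attachFin] at hle
    have hcard := Finset.card_union_le (Finset.Ico v.val i)
      (Finset.Ico (3*i+2) (v.val + 2*i+1))
    rw [Nat.card_Ico, Nat.card_Ico] at hcard
    omega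
  have hacc := hL_O L' herr w
  obtain ⟨φ, hφ⟩ := exists_ball_iso i hi v w rfl
  have hv0 : (cycleGraph (2*i+2)).dist v v ≤ i := by
    rw [SimpleGraph.dist_self]; omega
  have h00 : ((v - v : Fin (2*i+2))).val = 0 := by simp [sub_self]
  have hφv : (↑(φ ⟨v, hv0⟩) : Fin (4*i+2)) = w := by
    apply Fin.ext
    rw [hφ ⟨v, hv0⟩]
    show v.val + ((v - v).val + i) % (2*i+2) = v.val + i
    rw [h00, Nat.zero_add, Nat.mod_eq_of_lt (by omega)]
  have hlab : ∀ u : {u : Fin (2*i+2) | (cycleGraph (2*i+2)).dist v u ≤ i},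
      L' ↑(φ u) = L_C ↑u := by
    rintro ⟨u, hu⟩
    have hd : (u - v).val ≠ i+1 := (cyc_ball_char i v u).mp hu
    have l1 := (u - v).isLt
    have e1 := mod_cases3 ((u - v).val + i) (2*i+2) (by omega)
    have hval : (↑(φ ⟨u, hu⟩) : Fin (4*i+2)).val
        = v.val + ((u - v).val + i) % (2*i+2) := hφ ⟨u, hu⟩
    have ho2i : ((u - v).val + i) % (2*i+2) ≤ 2*i := by omega
    have huvv : v + (u - v) = u := by ring
    have huval : u.val = (v.val + (u - v).val) % (2*i+2) := by
      conv_lhs => rw [← huvv]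
      rw [Fin.add_def]
    rw [hL', hL_C]
    simp only
    rw [if_pos (by rw [hval]; omega)]
    apply congrArg L_O
    apply Fin.ext
    show ((↑(φ ⟨u, hu⟩) : Fin (4*i+2)).val + i + 2) % (2*i+2) + i = i + u.val
    rw [hval]
    have e2 := mod_cases3 (v.val + ((u - v).val + i) % (2*i+2) + i + 2) (2*i+2) (by omega)
    have e3 := mod_cases3 (v.val + (u - v).val) (2*i+2) (by omega)
    omega
  have key := hLoc (2*i+2) (4*i+2) (cycleGraph (2*i+2)) (pathGraph (4*i+2))
    L_C L' v w φ hv0 hφv hlab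
  rw [hv, hacc] at key
  exact Bool.false_ne_true key
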